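/- Let G and H be non-archimedean CLI Polish groups, 𝒢 = (G_n) ∈ dgnb(G) and ℋ = (H_n) ∈ dgnb(H). Then 𝒢×ℋ = (G_n × H_n) ∈ dgnb(G × H), and for every k < ω, ρ^k(𝒢×ℋ) = max{ρ^k(𝒢), ρ^k(ℋ)}; moreover ρ(𝒢×ℋ) = max{ρ(𝒢), ρ(ℋ)} and rank(G × H) = max{rank(G), rank(H)}. -/

import Mathlib

noncomputable section

/-- `omegaPart a` is ω(a): the largest limit ordinal `≤ a`, or `0` if there is none. -/
def omegaPart (a : Ordinal) : Ordinal :=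
  sSup {b : Ordinal | (b = 0 ∨ Order.IsSuccLimit b) ∧ b ≤ a}

/-- `IsTree lt` says that the binary relation `lt` on `T` is a tree order: it is irreflexive,
transitive, and the set of predecessors of any node is finite and linearly ordered. -/
def IsTree {T : Type*} (lt : T → T → Prop) : Prop :=
  (∀ s, ¬ lt s s) ∧
  (∀ s t u, lt s t → lt t u → lt s u) ∧
  (∀ s, {t | lt t s}.Finite) ∧
  (∀ s t u, lt t s → lt u s → t = u ∨ lt t u ∨ lt u t)

/-- The length `lh s` of a node of a tree: the number of its strict predecessors. -/
def lh {T : Type*} (lt : T → T → Prop) (s : T) : ℕ :=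
  Nat.card {t | lt t s}

/-- The rank `ρ(T)` of a tree `(T, lt)`: for a well-founded tree it is
`sup { ρ_T(s) + 1 : s ∈ T }` where `ρ_T(s) = sup { ρ_T(t) + 1 : s < t }`;
for an ill-founded tree we use the junk value `0`. -/
def rhoRel {T : Type u} (lt : T → T → Prop) : Ordinal.{u} :=
  letI := Classical.dec (WellFounded (Function.swap lt))
  if h : WellFounded (Function.swap lt) then ⨆ s : T, Order.succ ((h.apply s).rank) else 0

/-- The nodes of the tree `T_ℰ^X` associated to a sequence `E` of (equivalence) relations
on `X`: pairs `(n, C)` where `C` is a non-singleton class `[x]_{E n}`. -/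
def TreeNode (X : Type u) (E : ℕ → X → X → Prop) : Type u :=
  {p : ℕ × Set X // ∃ x : X, p.2 = {y | E p.1 x y} ∧ p.2 ≠ {x}}

/-- The tree order on `T_ℰ^X`: `(n, C) < (m, D)` iff `n < m` and `C ⊇ D`. -/
def nodeLT {X : Type u} (E : ℕ → X → X → Prop) :
    TreeNode X E → TreeNode X E → Prop :=
  fun s t => s.1.1 < t.1.1 ∧ t.1.2 ⊆ s.1.2

/-- The tree `T_ℰ^X` is well-founded: no infinite strictly increasing sequence. -/
def TreeWF (X : Type u) (E : ℕ → X → X → Prop) : Prop :=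
  WellFounded (Function.swap (nodeLT E))

/-- The rank `ρ(T_ℰ^X)`. -/
def treeRho (X : Type u) (E : ℕ → X → X → Prop) : Ordinal.{u} :=
  rhoRel (nodeLT E)

/-- A Polish group: a topological group whose topology is Polish. -/
def IsPolishGroup (G : Type u) [Group G] [TopologicalSpace G] : Prop :=
  IsTopologicalGroup G ∧ PolishSpace G

/-- A topological group is non-archimedean if the open subgroups form a
neighborhood base of the identity. -/
def IsNonArch (G : Type u) [Group G] [TopologicalSpace G] : Prop :=
  ∀ U ∈ nhds (1 : G), ∃ H : Subgroup G, IsOpen (H : Set G) ∧ (H : Set G) ⊆ U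

/-- A topological group is CLI if it admits a compatible complete left-invariant metric. -/
def IsCLI (G : Type u) [Group G] [TopologicalSpace G] : Prop :=
  ∃ m : MetricSpace G,
    m.toUniformSpace.toTopologicalSpace = ‹TopologicalSpace G› ∧
    @CompleteSpace G m.toUniformSpace ∧
    ∀ g h k : G, m.dist (g * h) (g * k) = m.dist h k

/-- A topological group is TSI if it admits a compatible complete two-sided-invariant metric. -/
def IsTSI (G : Type u) [Group G] [TopologicalSpace G] : Prop :=
  ∃ m : MetricSpace G,
    m.toUniformSpace.toTopologicalSpace = ‹TopologicalSpace G› ∧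
    @CompleteSpace G m.toUniformSpace ∧
    ∀ g h k : G, m.dist (g * h) (g * k) = m.dist h k ∧ m.dist (h * g) (k * g) = m.dist h k

/-- `Dgnb G` is the set `dgnb(G)`: decreasing sequences `(G_n)` of open subgroups of `G`
with `G_0 = G` forming a neighborhood base of `1_G`. -/
structure Dgnb (G : Type u) [Group G] [TopologicalSpace G] where
  seq : ℕ → Subgroup G
  isOpen : ∀ n, IsOpen ((seq n : Set G))
  antitone : ∀ n, seq (n + 1) ≤ seq n
  zero_eq_top : seq 0 = ⊤
  basis : ∀ U ∈ nhds (1 : G), ∃ n, ((seq n : Set G)) ⊆ U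

/-- The orbit equivalence relation of (the action of) a subgroup `H ≤ G` on a `G`-space `X`:
`x ∼ y` iff `g • x = y` for some `g ∈ H`. -/
def subOrbit {G : Type u} [Group G] (H : Subgroup G) (X : Type v) [MulAction G X] :
    X → X → Prop :=
  fun x y => ∃ g ∈ H, g • x = y

/-- The tree `T_𝒢^X` of a `𝒢 ∈ dgnb(G)` and a `G`-space `X`: nodes are pairs `(n, C)`
with `C` a non-singleton `G_n`-orbit. We record it by its defining sequence of relations. -/
def dgnbRel {G : Type u} [Group G] [TopologicalSpace G] (𝒢 : Dgnb G) (X : Type v)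
    [MulAction G X] : ℕ → X → X → Prop :=
  fun n => subOrbit (𝒢.seq n) X

/-- `ρ^k(𝒢) = ρ(T_𝒢^{G/G_k})`, where `G` acts by left translation on `G/G_k`. -/
def rhoK {G : Type u} [Group G] [TopologicalSpace G] (𝒢 : Dgnb G) (k : ℕ) : Ordinal.{u} :=
  treeRho (G ⧸ 𝒢.seq k) (dgnbRel 𝒢 (G ⧸ 𝒢.seq k))

/-- `ρ(𝒢) = ρ(T_𝒢^{X(𝒢)})` where `X(𝒢) = ⊔_k G/G_k` is the disjoint union of the coset
spaces, with `G` acting by left translation on each summand. -/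
def rhoDgnb {G : Type u} [Group G] [TopologicalSpace G] (𝒢 : Dgnb G) : Ordinal.{u} :=
  treeRho (Σ k : ℕ, G ⧸ 𝒢.seq k)
    (fun n p q => ∃ g ∈ 𝒢.seq n, q = ⟨p.1, g • p.2⟩)

/-- `G` is α-CLI if `ρ(𝒢) ≤ ω·α` for any (equivalently, some) `𝒢 ∈ dgnb(G)`. -/
def IsAlphaCLI (G : Type u) [Group G] [TopologicalSpace G] (α : Ordinal.{u}) : Prop :=
  ∀ 𝒢 : Dgnb G, rhoDgnb 𝒢 ≤ Ordinal.omega0 * α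

/-- `G` is L-α-CLI if `rank(G) ≤ α`, i.e. `ω(ρ(𝒢)) ≤ ω·α` for any (equivalently, some)
`𝒢 ∈ dgnb(G)`. -/
def IsLAlphaCLI (G : Type u) [Group G] [TopologicalSpace G] (α : Ordinal.{u}) : Prop :=
  ∀ 𝒢 : Dgnb G, omegaPart (rhoDgnb 𝒢) ≤ Ordinal.omega0 * α



set_option linter.deprecated false
set_option linter.unusedVariables false
set_option linter.unusedSectionVars false
set_option maxHeartbeats 1000000

noncomputable def WellFounded.rank {α : Type u} {r : α → α → Prop} (hwf : WellFounded r) (a : α) :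
    Ordinal.{u} :=
  (hwf.apply a).rank

theorem WellFounded.rank_eq {α : Type u} {r : α → α → Prop} (hwf : WellFounded r) (a : α) :
    hwf.rank a = ⨆ b : { b // r b a }, Order.succ (hwf.rank b) :=
  (hwf.apply a).rank_eq

theorem WellFounded.rank_lt_of_rel {α : Type u} {r : α → α → Prop} {a b : α} (hwf : WellFounded r)
    (h : r a b) : hwf.rank a < hwf.rank b :=
  Acc.rank_lt_of_rel _ h

section RankLemmas

variable {α β : Type} {r : α → α → Prop} {s : β → β → Prop}

theorem wf_of_hom (f : α → β) (hf : ∀ a b, r a b → s (f a) (f b))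
    (hs : WellFounded s) : WellFounded r :=
  Subrelation.wf (fun {a b} h => hf a b h) (InvImage.wf f hs)

theorem rank_le_rank_of_hom (hr : WellFounded r) (hs : WellFounded s) (f : α → β)
    (hf : ∀ a b, r a b → s (f a) (f b)) : ∀ a, hr.rank a ≤ hs.rank (f a) := by
  intro a
  induction a using hr.induction with
  | _ a IH =>
    rw [hr.rank_eq, hs.rank_eq]
    apply Ordinal.iSup_le
    rintro ⟨b, hb⟩
    exact le_trans (Order.succ_le_succ (IH b hb)) (Ordinal.le_iSup
      (fun c : {c // s c (f a)} => Order.succ (hs.rank c)) ⟨f b, hf b a hb⟩)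

/-- rank is equal along a hom that reflects children surjectively. -/
theorem rank_eq_rank_of_hom (hr : WellFounded r) (hs : WellFounded s) (f : α → β)
    (hf : ∀ a b, r a b → s (f a) (f b))
    (hrefl : ∀ a b', s b' (f a) → ∃ b, r b a ∧ f b = b') :
    ∀ a, hs.rank (f a) = hr.rank a := by
  intro a
  induction a using hr.induction with
  | _ a IH =>
    apply le_antisymm
    · rw [hr.rank_eq, hs.rank_eq]
      apply Ordinal.iSup_le
      rintro ⟨b', hb'⟩
      obtain ⟨b, hb, rfl⟩ := hrefl a b' hb'
      exact le_trans (Order.succ_le_succ (le_of_eq (IH b hb)))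
        (Ordinal.le_iSup (fun c : {c // r c a} => Order.succ (hr.rank c)) ⟨b, hb⟩)
    · exact rank_le_rank_of_hom hr hs f hf a

theorem rhoRel_eq_of_wf {T : Type} {lt : T → T → Prop} (h : WellFounded (Function.swap lt)) :
    rhoRel lt = ⨆ s : T, Order.succ (h.rank s) := by
  rw [rhoRel]
  exact dif_pos h

theorem rhoRel_le_of_hom {T T' : Type} {lt : T → T → Prop} {lt' : T' → T' → Prop}
    (f : T → T') (hf : ∀ a b, lt a b → lt' (f a) (f b))
    (h' : WellFounded (Function.swap lt')) : rhoRel lt ≤ rhoRel lt' := by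
  have h : WellFounded (Function.swap lt) :=
    wf_of_hom f (fun a b hab => hf b a hab) h'
  rw [rhoRel_eq_of_wf h, rhoRel_eq_of_wf h']
  apply Ordinal.iSup_le
  intro a
  exact le_trans (Order.succ_le_succ
    (rank_le_rank_of_hom h h' f (fun a b hab => hf b a hab) a))
    (Ordinal.le_iSup (fun t : T' => Order.succ (h'.rank t)) (f a))

theorem rhoRel_eq_of_iso {T T' : Type} {lt : T → T → Prop} {lt' : T' → T' → Prop}
    (e : T ≃ T') (he : ∀ a b, lt a b ↔ lt' (e a) (e b))
    (h' : WellFounded (Function.swap lt')) : rhoRel lt = rhoRel lt' := by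
  have h : WellFounded (Function.swap lt) :=
    wf_of_hom e (fun a b hab => (he b a).1 hab) h'
  refine le_antisymm (rhoRel_le_of_hom e (fun a b hab => (he a b).1 hab) h') ?_
  refine rhoRel_le_of_hom e.symm (fun a b hab => ?_) h
  rw [he]; simpa using hab

theorem rhoRel_congr {T : Type} {lt lt' : T → T → Prop}
    (h : ∀ a b, lt a b ↔ lt' a b) : rhoRel lt = rhoRel lt' := by
  have : lt = lt' := by funext a b; exact propext (h a b)
  rw [this]

end RankLemmas

theorem subgroup_seq_mono {G : Type} [Group G] (seq : ℕ → Subgroup G)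
    (hanti : ∀ n, seq (n + 1) ≤ seq n) {m n : ℕ} (h : m ≤ n) : seq n ≤ seq m := by
  induction n, h using Nat.le_induction with
  | base => exact le_rfl
  | succ n hmn IH => exact le_trans (hanti n) IH

theorem treeWF_aux {G : Type} [Group G] [MetricSpace G] [IsTopologicalGroup G] [CompleteSpace G]
    (hinv : ∀ g h k : G, dist (g * h) (g * k) = dist h k)
    (seq : ℕ → Subgroup G) (hanti : ∀ n, seq (n + 1) ≤ seq n)
    (hbasis : ∀ U ∈ nhds (1 : G), ∃ n, ((seq n : Set G)) ⊆ U)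
    {X : Type} (act : G → X → X)
    (act_one : ∀ x, act 1 x = x) (act_mul : ∀ g h x, act (g * h) x = act g (act h x))
    (hstab : ∀ x : X, IsOpen {g : G | act g x = x}) :
    TreeWF X (fun n x y => ∃ g ∈ seq n, act g x = y) := by
  set E : ℕ → X → X → Prop := fun n x y => ∃ g ∈ seq n, act g x = y with hE
  by_contra hwf
  haveI : IsIrrefl (TreeNode X E) (Function.swap (nodeLT E)) :=
    ⟨fun s hs => lt_irrefl _ hs.1⟩
  haveI : IsTrans (TreeNode X E) (Function.swap (nodeLT E)) :=
    ⟨fun s t u hst htu => ⟨lt_trans htu.1 hst.1, hst.2.trans htu.2⟩⟩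
  haveI : IsStrictOrder (TreeNode X E) (Function.swap (nodeLT E)) := ⟨⟩
  rw [TreeWF, RelEmbedding.wellFounded_iff_isEmpty, not_isEmpty_iff] at hwf
  obtain ⟨f⟩ := hwf
  have hstep : ∀ i : ℕ, nodeLT E (f i) (f (i + 1)) := by
    intro i
    exact f.map_rel_iff.2 (Nat.lt_succ_self i)
  set nn : ℕ → ℕ := fun i => (f i).1.1 with hnn
  set C : ℕ → Set X := fun i => (f i).1.2 with hC
  have nmono : StrictMono nn := strictMono_nat_of_lt_succ fun i => (hstep i).1
  have hsub : ∀ i, C (i + 1) ⊆ C i := fun i => (hstep i).2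
  have hilen : ∀ i, i ≤ nn i := fun i => nmono.le_apply
  have hwit : ∀ i, ∃ x, C i = {y | E (nn i) x y} ∧ C i ≠ {x} := fun i => (f i).2
  choose x hclass hne using hwit
  have hmemC : ∀ i, x i ∈ C i := by
    intro i
    rw [hclass i]
    exact ⟨1, one_mem _, act_one _⟩
  have hg : ∀ i, ∃ g ∈ seq (nn i), act g (x i) = x (i + 1) := by
    intro i
    have : x (i + 1) ∈ C i := hsub i (hmemC (i + 1))
    rw [hclass i] at this
    exact this
  choose g hgmem hgact using hg
  set h : ℕ → G := fun i => Nat.rec 1 (fun j hj => g j * hj) i with hh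
  have hh0 : h 0 = 1 := rfl
  have hhs : ∀ i, h (i + 1) = g i * h i := fun i => rfl
  have hx : ∀ i, x i = act (h i) (x 0) := by
    intro i
    induction i with
    | zero => rw [hh0, act_one]
    | succ i IH => rw [hhs, act_mul, ← IH, hgact]
  set s : ℕ → G := fun i => (h i)⁻¹ with hs
  have hkey : ∀ i j, i ≤ j → (s i)⁻¹ * s j ∈ seq (nn i) := by
    intro i j hij
    induction j, hij using Nat.le_induction with
    | base => simpa using one_mem _
    | succ j hij IH =>
      have hstep' : s (j + 1) = s j * (g j)⁻¹ := by
        simp only [hs, hhs, mul_inv_rev]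
      rw [hstep', ← mul_assoc]
      exact mul_mem IH (inv_mem (subgroup_seq_mono seq hanti (nmono.monotone hij) (hgmem j)))
  -- Cauchy
  have hcauchy : CauchySeq s := by
    rw [Metric.cauchySeq_iff]
    intro ε hε
    obtain ⟨N, hN⟩ := hbasis (Metric.ball (1 : G) ε) (Metric.ball_mem_nhds 1 hε)
    refine ⟨N, fun i hi j hj => ?_⟩
    have key : ∀ i j : ℕ, N ≤ i → i ≤ j → dist (s i) (s j) < ε := by
      intro i j hNi hij
      have h1 : dist (s i) (s j) = dist (1 : G) ((s i)⁻¹ * s j) := by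
        have := hinv (s i) 1 ((s i)⁻¹ * s j)
        rw [mul_one, mul_inv_cancel_left] at this
        exact this
      have h2 : (s i)⁻¹ * s j ∈ seq N :=
        subgroup_seq_mono seq hanti (le_trans hNi (hilen i)) (hkey i j hij)
      have h3 := hN h2
      rw [Metric.mem_ball] at h3
      rw [h1, dist_comm]
      exact h3
    rcases le_total i j with hij | hij
    · exact key i j hi hij
    · rw [dist_comm]
      exact key j i hj hij
  obtain ⟨sl, hsl⟩ := cauchySeq_tendsto_of_complete hcauchy
  set S := {g : G | act g (x 0) = x 0} with hSdef
  have hS : IsOpen S := hstab (x 0)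
  have hpsi : Continuous (fun p : G × G => p.1 * p.2 * p.1⁻¹) :=
    (continuous_fst.mul continuous_snd).mul continuous_fst.inv
  have hopen : IsOpen ((fun p : G × G => p.1 * p.2 * p.1⁻¹) ⁻¹' S) :=
    hS.preimage hpsi
  have h1mem : ((sl, (1 : G)) : G × G) ∈ (fun p : G × G => p.1 * p.2 * p.1⁻¹) ⁻¹' S := by
    show act (sl * 1 * sl⁻¹) (x 0) = x 0
    rw [mul_one, mul_inv_cancel, act_one]
  obtain ⟨U, V, hU, hV, hslU, h1V, hUV⟩ := isOpen_prod_iff.1 hopen sl 1 h1mem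
  obtain ⟨M, hM⟩ := hbasis V (hV.mem_nhds h1V)
  obtain ⟨I, hI⟩ := Filter.eventually_atTop.1 (hsl.eventually (hU.mem_nhds hslU))
  set i := max I M with hi
  -- a nontrivial mover of x i
  have hzex : ∃ z ∈ C i, z ≠ x i := by
    by_contra hcon
    push_neg at hcon
    apply hne i
    apply Set.Subset.antisymm
    · intro z hz
      exact hcon z hz
    · intro z hz
      rw [Set.mem_singleton_iff] at hz
      rw [hz]
      exact hmemC i
  obtain ⟨z, hz, hzne⟩ := hzex
  rw [hclass i] at hz
  obtain ⟨gg, hggmem, hggact⟩ := hz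
  have hggne : act gg (x i) ≠ x i := by rw [hggact]; exact hzne
  have hggV : gg ∈ V := hM (subgroup_seq_mono seq hanti
    (le_trans (le_max_right I M) (hilen i)) hggmem)
  have hsiU : s i ∈ U := hI i (le_max_left I M)
  have hSmem : s i * gg * (s i)⁻¹ ∈ S := hUV (Set.mk_mem_prod hsiU hggV)
  apply hggne
  have hxi : x i = act ((s i)⁻¹) (x 0) := by
    rw [hs]
    simpa using hx i
  rw [hxi, ← act_mul]
  have : gg * (s i)⁻¹ = (s i)⁻¹ * (s i * gg * (s i)⁻¹) := by group
  rw [this, act_mul, hSmem, ← hxi]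

theorem treeWF_of_cli {G : Type} [Group G] [TopologicalSpace G] [IsTopologicalGroup G]
    (hcli : IsCLI G) (𝒢 : Dgnb G) {X : Type} (act : G → X → X)
    (act_one : ∀ x, act 1 x = x) (act_mul : ∀ g h x, act (g * h) x = act g (act h x))
    (hstab : ∀ x : X, IsOpen {g : G | act g x = x}) :
    TreeWF X (fun n x y => ∃ g ∈ 𝒢.seq n, act g x = y) := by
  obtain ⟨m, htop, hcomp, hinv⟩ := hcli
  letI : MetricSpace G := m
  haveI : @IsTopologicalGroup G m.toUniformSpace.toTopologicalSpace _ := by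
    rw [htop]; infer_instance
  haveI : @CompleteSpace G m.toUniformSpace := hcomp
  have hstab' : ∀ x : X, @IsOpen G m.toUniformSpace.toTopologicalSpace {g : G | act g x = x} := by
    intro x
    rw [htop]
    exact hstab x
  have hbasis' : ∀ U ∈ @nhds G m.toUniformSpace.toTopologicalSpace (1 : G),
      ∃ n, ((𝒢.seq n : Set G)) ⊆ U := by
    rw [htop]
    exact 𝒢.basis
  exact treeWF_aux hinv 𝒢.seq 𝒢.antitone hbasis' act act_one act_mul hstab'

section ProductLemma

variable {X Y : Type} (E : ℕ → X → X → Prop) (F : ℕ → Y → Y → Prop)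

/-- the class rank helper -/
def pRank (wf : TreeWF X E) (n : ℕ) (x : X) : Ordinal :=
  letI := Classical.dec (({u | E n x u} : Set X) ≠ {x})
  if h : ({u | E n x u} : Set X) ≠ {x} then
    (wf : WellFounded _).rank (⟨(n, {u | E n x u}), x, rfl, h⟩ : TreeNode X E) else 0

variable {E F}
variable (hEr : ∀ n x, E n x x) (hFr : ∀ n y, F n y y)
    (hEe : ∀ n x y, E n x y → ∀ z, (E n x z ↔ E n y z))
    (hFe : ∀ n y y', F n y y' → ∀ z, (F n y z ↔ F n y' z))
    (hEa : ∀ m n x y, m ≤ n → E n x y → E m x y)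
    (hFa : ∀ m n x y, m ≤ n → F n x y → F m x y)

def prodRel {X Y : Type} (E : ℕ → X → X → Prop) (F : ℕ → Y → Y → Prop) :
    ℕ → X × Y → X × Y → Prop :=
  fun n p q => E n p.1 q.1 ∧ F n p.2 q.2

theorem class_prod (n : ℕ) (p : X × Y) :
    {q : X × Y | prodRel E F n p q} = {u | E n p.1 u} ×ˢ {v | F n p.2 v} := by
  ext q
  simp [prodRel, Set.mem_prod]

include hEr hFr hEe hFe in
theorem prod_rank_key (wfX : TreeWF X E) (wfY : TreeWF Y F) (wfP : TreeWF (X × Y) (prodRel E F)) :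
    ∀ s : TreeNode (X × Y) (prodRel E F), ∀ x y,
      s.1.2 = {u | E s.1.1 x u} ×ˢ {v | F s.1.1 y v} →
      (wfP : WellFounded _).rank s ≤ max (pRank E wfX s.1.1 x) (pRank F wfY s.1.1 y) := by
  intro s
  induction s using (wfP : WellFounded _).induction with
  | _ s IH =>
    intro x y hA
    rw [WellFounded.rank_eq (hwf := wfP)]
    apply Ordinal.iSup_le
    rintro ⟨t, ht⟩
    have ht' : nodeLT (prodRel E F) s t := ht
    obtain ⟨⟨x', y'⟩, hB0, hBne⟩ := t.2
    have hB : t.1.2 = {u | E t.1.1 x' u} ×ˢ {v | F t.1.1 y' v} := by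
      rw [hB0]
      ext q
      simp [prodRel, Set.mem_prod]
    have hnm : s.1.1 < t.1.1 := ht'.1
    have hsub : t.1.2 ⊆ s.1.2 := ht'.2
    have hBXsub : {u | E t.1.1 x' u} ⊆ {u | E s.1.1 x u} := by
      intro u hu
      have : (u, y') ∈ t.1.2 := by
        rw [hB]
        exact ⟨hu, hFr _ _⟩
      have := hsub this
      rw [hA] at this
      exact this.1
    have hBYsub : {v | F t.1.1 y' v} ⊆ {v | F s.1.1 y v} := by
      intro v hv
      have : (x', v) ∈ t.1.2 := by
        rw [hB]
        exact ⟨hEr _ _, hv⟩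
      have := hsub this
      rw [hA] at this
      exact this.2
    have hXbound : Order.succ (pRank E wfX t.1.1 x') ≤
        max (pRank E wfX s.1.1 x) (pRank F wfY s.1.1 y) := by
      by_cases hBX : ({u | E t.1.1 x' u} : Set X) ≠ {x'}
      · have hAX : ({u | E s.1.1 x u} : Set X) ≠ {x} := by
          intro hax
          apply hBX
          apply Set.Subset.antisymm
          · intro u hu
            have h1 := hBXsub hu
            rw [hax] at h1
            have h2 : x' ∈ ({u | E s.1.1 x u} : Set X) := hBXsub (hEr _ _)
            rw [hax] at h2
            rw [Set.mem_singleton_iff] at h1 h2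
            rw [h1, h2]
            rfl
          · intro u hu
            rw [Set.mem_singleton_iff] at hu
            rw [hu]
            exact hEr _ _
        simp only [pRank]
        rw [dif_pos hBX, dif_pos hAX]
        refine le_max_of_le_left (Order.succ_le_of_lt ?_)
        exact (wfX : WellFounded _).rank_lt_of_rel (⟨hnm, hBXsub⟩ : nodeLT E _ _)
      · simp only [pRank]
        rw [dif_neg hBX]
        rw [not_not] at hBX
        have hBY : ({v | F t.1.1 y' v} : Set Y) ≠ {y'} := by
          intro hby
          apply hBne
          rw [hB, hBX, hby, Set.singleton_prod_singleton]
        have hAY : ({v | F s.1.1 y v} : Set Y) ≠ {y} := by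
          intro hay
          apply hBY
          apply Set.Subset.antisymm
          · intro v hv
            have h1 := hBYsub hv
            rw [hay] at h1
            have h2 : y' ∈ ({v | F s.1.1 y v} : Set Y) := hBYsub (hFr _ _)
            rw [hay] at h2
            rw [Set.mem_singleton_iff] at h1 h2
            rw [h1, h2]
            rfl
          · intro v hv
            rw [Set.mem_singleton_iff] at hv
            rw [hv]
            exact hFr _ _
        refine le_max_of_le_right ?_
        rw [dif_pos hAY]
        have hlt := (wfY : WellFounded _).rank_lt_of_rel
          ((⟨hnm, hBYsub⟩ : nodeLT F ⟨(s.1.1, {v | F s.1.1 y v}), y, rfl, hAY⟩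
            ⟨(t.1.1, {v | F t.1.1 y' v}), y', rfl, hBY⟩))
        have : (1 : Ordinal) ≤ (wfY : WellFounded _).rank
            (⟨(s.1.1, {v | F s.1.1 y v}), y, rfl, hAY⟩ : TreeNode Y F) := by
          rw [Order.one_le_iff_pos]
          exact lt_of_le_of_lt zero_le hlt
        simpa using this
    have hYbound : Order.succ (pRank F wfY t.1.1 y') ≤
        max (pRank E wfX s.1.1 x) (pRank F wfY s.1.1 y) := by
      by_cases hBY : ({v | F t.1.1 y' v} : Set Y) ≠ {y'}
      · have hAY : ({v | F s.1.1 y v} : Set Y) ≠ {y} := by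
          intro hay
          apply hBY
          apply Set.Subset.antisymm
          · intro v hv
            have h1 := hBYsub hv
            rw [hay] at h1
            have h2 : y' ∈ ({v | F s.1.1 y v} : Set Y) := hBYsub (hFr _ _)
            rw [hay] at h2
            rw [Set.mem_singleton_iff] at h1 h2
            rw [h1, h2]
            rfl
          · intro v hv
            rw [Set.mem_singleton_iff] at hv
            rw [hv]
            exact hFr _ _
        simp only [pRank]
        rw [dif_pos hBY, dif_pos hAY]
        refine le_max_of_le_right (Order.succ_le_of_lt ?_)
        exact (wfY : WellFounded _).rank_lt_of_rel (⟨hnm, hBYsub⟩ : nodeLT F _ _)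
      · simp only [pRank]
        rw [dif_neg hBY]
        rw [not_not] at hBY
        have hBX : ({u | E t.1.1 x' u} : Set X) ≠ {x'} := by
          intro hbx
          apply hBne
          rw [hB, hbx, hBY, Set.singleton_prod_singleton]
        have hAX : ({u | E s.1.1 x u} : Set X) ≠ {x} := by
          intro hax
          apply hBX
          apply Set.Subset.antisymm
          · intro u hu
            have h1 := hBXsub hu
            rw [hax] at h1
            have h2 : x' ∈ ({u | E s.1.1 x u} : Set X) := hBXsub (hEr _ _)
            rw [hax] at h2
            rw [Set.mem_singleton_iff] at h1 h2
            rw [h1, h2]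
            rfl
          · intro u hu
            rw [Set.mem_singleton_iff] at hu
            rw [hu]
            exact hEr _ _
        refine le_max_of_le_left ?_
        rw [dif_pos hAX]
        have hlt := (wfX : WellFounded _).rank_lt_of_rel
          ((⟨hnm, hBXsub⟩ : nodeLT E ⟨(s.1.1, {u | E s.1.1 x u}), x, rfl, hAX⟩
            ⟨(t.1.1, {u | E t.1.1 x' u}), x', rfl, hBX⟩))
        have : (1 : Ordinal) ≤ (wfX : WellFounded _).rank
            (⟨(s.1.1, {u | E s.1.1 x u}), x, rfl, hAX⟩ : TreeNode X E) := by
          rw [Order.one_le_iff_pos]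
          exact lt_of_le_of_lt zero_le hlt
        simpa using this
    have hIH := IH t ht x' y' hB
    have : Order.succ ((wfP : WellFounded _).rank t) ≤
        Order.succ (max (pRank E wfX t.1.1 x') (pRank F wfY t.1.1 y')) :=
      Order.succ_le_succ hIH
    refine le_trans this ?_
    rcases max_cases (pRank E wfX t.1.1 x') (pRank F wfY t.1.1 y') with ⟨hm, _⟩ | ⟨hm, _⟩
    · rw [hm]; exact hXbound
    · rw [hm]; exact hYbound



set_option linter.unusedSectionVars false

include hEr hFr hEe hFe hEa hFa in
theorem treeRho_prod (x0 : X) (y0 : Y)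
    (wfX : TreeWF X E) (wfY : TreeWF Y F) (wfP : TreeWF (X × Y) (prodRel E F)) :
    treeRho (X × Y) (prodRel E F) = max (treeRho X E) (treeRho Y F) := by
  apply le_antisymm
  · -- ≤
    rw [treeRho, rhoRel_eq_of_wf (wfP : WellFounded _)]
    apply Ordinal.iSup_le
    intro s
    obtain ⟨⟨x, y⟩, hA0, hAne⟩ := s.2
    have hA : s.1.2 = {u | E s.1.1 x u} ×ˢ {v | F s.1.1 y v} := by
      rw [hA0]
      ext q
      simp [prodRel, Set.mem_prod]
    have key := prod_rank_key hEr hFr hEe hFe wfX wfY wfP s x y hA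
    have hsucc : Order.succ ((wfP : WellFounded _).rank s) ≤
        Order.succ (max (pRank E wfX s.1.1 x) (pRank F wfY s.1.1 y)) :=
      Order.succ_le_succ key
    refine le_trans hsucc ?_
    have hXside : ({u | E s.1.1 x u} : Set X) ≠ {x} →
        Order.succ (pRank E wfX s.1.1 x) ≤ treeRho X E := by
      intro hAX
      rw [pRank, dif_pos hAX, treeRho, rhoRel_eq_of_wf (wfX : WellFounded _)]
      exact Ordinal.le_iSup (fun t : TreeNode X E =>
        Order.succ ((wfX : WellFounded _).rank t)) ⟨(s.1.1, {u | E s.1.1 x u}), x, rfl, hAX⟩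
    have hYside : ({v | F s.1.1 y v} : Set Y) ≠ {y} →
        Order.succ (pRank F wfY s.1.1 y) ≤ treeRho Y F := by
      intro hAY
      rw [pRank, dif_pos hAY, treeRho, rhoRel_eq_of_wf (wfY : WellFounded _)]
      exact Ordinal.le_iSup (fun t : TreeNode Y F =>
        Order.succ ((wfY : WellFounded _).rank t)) ⟨(s.1.1, {v | F s.1.1 y v}), y, rfl, hAY⟩
    -- at least one side is non-singleton
    have hone : ({u | E s.1.1 x u} : Set X) ≠ {x} ∨ ({v | F s.1.1 y v} : Set Y) ≠ {y} := by
      by_contra hcon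
      push_neg at hcon
      apply hAne
      rw [hA, hcon.1, hcon.2, Set.singleton_prod_singleton]
    rcases max_cases (pRank E wfX s.1.1 x) (pRank F wfY s.1.1 y) with ⟨hm, _⟩ | ⟨hm, _⟩ <;>
      rw [hm]
    · by_cases hAX : ({u | E s.1.1 x u} : Set X) ≠ {x}
      · exact le_max_of_le_left (hXside hAX)
      · rw [pRank, dif_neg hAX]
        rcases hone with h | h
        · exact absurd h hAX
        · refine le_max_of_le_right (le_trans ?_ (hYside h))
          simpa using Order.succ_le_succ ((zero_le : (0 : Ordinal) ≤ pRank F wfY s.1.1 y))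
    · by_cases hAY : ({v | F s.1.1 y v} : Set Y) ≠ {y}
      · exact le_max_of_le_right (hYside hAY)
      · rw [pRank, dif_neg hAY]
        rcases hone with h | h
        · refine le_max_of_le_left (le_trans ?_ (hXside h))
          simpa using Order.succ_le_succ ((zero_le : (0 : Ordinal) ≤ pRank E wfX s.1.1 x))
        · exact absurd h hAY
  · -- ≥
    apply max_le
    · -- X side embeds
      refine rhoRel_le_of_hom (fun sX => ⟨(sX.1.1, sX.1.2 ×ˢ {v | F sX.1.1 y0 v}), ?_⟩)
        ?_ (wfP : WellFounded _)
      · obtain ⟨x, hx1, hx2⟩ := sX.2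
        refine ⟨(x, y0), ?_, ?_⟩
        · show sX.1.2 ×ˢ {v | F sX.1.1 y0 v} = {q | prodRel E F sX.1.1 (x, y0) q}
          rw [class_prod, hx1]
        · intro hcon
          have hcon' : sX.1.2 ×ˢ {v | F sX.1.1 y0 v} = {(x, y0)} := hcon
          apply hx2
          apply Set.Subset.antisymm
          · intro u hu
            have : (u, y0) ∈ sX.1.2 ×ˢ {v | F sX.1.1 y0 v} := ⟨hu, hFr _ _⟩
            rw [hcon'] at this
            rw [Set.mem_singleton_iff] at this
            rw [Set.mem_singleton_iff]
            exact congrArg Prod.fst this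
          · intro u hu
            rw [Set.mem_singleton_iff] at hu
            rw [hu, hx1]
            exact hEr _ _
      · intro a b hab
        exact ⟨hab.1, Set.prod_mono hab.2 (fun v hv => hFa _ _ _ _ (le_of_lt hab.1) hv)⟩
    · -- Y side embeds
      refine rhoRel_le_of_hom (fun sY => ⟨(sY.1.1, {u | E sY.1.1 x0 u} ×ˢ sY.1.2), ?_⟩)
        ?_ (wfP : WellFounded _)
      · obtain ⟨y, hy1, hy2⟩ := sY.2
        refine ⟨(x0, y), ?_, ?_⟩
        · show {u | E sY.1.1 x0 u} ×ˢ sY.1.2 = {q | prodRel E F sY.1.1 (x0, y) q}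
          rw [class_prod, hy1]
        · intro hcon
          have hcon' : {u | E sY.1.1 x0 u} ×ˢ sY.1.2 = {(x0, y)} := hcon
          apply hy2
          apply Set.Subset.antisymm
          · intro v hv
            have : (x0, v) ∈ {u | E sY.1.1 x0 u} ×ˢ sY.1.2 := ⟨hEr _ _, hv⟩
            rw [hcon'] at this
            rw [Set.mem_singleton_iff] at this
            rw [Set.mem_singleton_iff]
            exact congrArg Prod.snd this
          · intro v hv
            rw [Set.mem_singleton_iff] at hv
            rw [hv, hy1]
            exact hFr _ _
      · intro a b hab
        exact ⟨hab.1, Set.prod_mono (fun u hu => hEa _ _ _ _ (le_of_lt hab.1) hu) hab.2⟩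

end ProductLemma

section SigmaLemma

variable {T : ℕ → Type} (E : (k : ℕ) → ℕ → T k → T k → Prop)

def sigmaRel : ℕ → (Σ k, T k) → (Σ k, T k) → Prop :=
  fun n p q => ∃ k a b, E k n a b ∧ p = ⟨k, a⟩ ∧ q = ⟨k, b⟩

variable {E}

theorem sigmaRel_class (n k : ℕ) (a : T k) :
    {q : Σ k, T k | sigmaRel E n ⟨k, a⟩ q} = Sigma.mk k '' {b | E k n a b} := by
  ext q
  constructor
  · rintro ⟨k', a', b', hE, hp, rfl⟩
    obtain ⟨rfl, h2⟩ := Sigma.mk.inj_iff.1 hp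
    rw [← eq_of_heq h2] at hE
    exact ⟨b', hE, rfl⟩
  · rintro ⟨b, hb, rfl⟩
    exact ⟨k, a, b, hb, rfl, rfl⟩

variable (hrefl : ∀ k n a, E k n a a)

/-- embedding of a fiber tree into the sigma tree -/
def sigmaNode (k : ℕ) (s : TreeNode (T k) (E k)) : TreeNode (Σ k, T k) (sigmaRel E) := by
  refine ⟨(s.1.1, Sigma.mk k '' s.1.2), ?_⟩
  obtain ⟨x, hx1, hx2⟩ := s.2
  refine ⟨⟨k, x⟩, ?_, ?_⟩
  · show Sigma.mk k '' s.1.2 = _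
    rw [sigmaRel_class, hx1]
  · intro hcon
    have hcon' : Sigma.mk k '' s.1.2 = {⟨k, x⟩} := hcon
    apply hx2
    have : Sigma.mk k '' s.1.2 = Sigma.mk k '' {x} := by
      rw [hcon', Set.image_singleton]
    exact Set.image_injective.2 sigma_mk_injective this

theorem sigmaNode_hom (k : ℕ) (a b : TreeNode (T k) (E k)) (hab : nodeLT (E k) a b) :
    nodeLT (sigmaRel E) (sigmaNode k a) (sigmaNode k b) :=
  ⟨hab.1, Set.image_mono hab.2⟩

theorem sigmaNode_surj (t : TreeNode (Σ k, T k) (sigmaRel E)) :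
    ∃ (k : ℕ) (t₀ : TreeNode (T k) (E k)), sigmaNode k t₀ = t := by
  obtain ⟨⟨k, a⟩, h1, h2⟩ := t.2
  have hcl : t.1.2 = Sigma.mk k '' {b | E k t.1.1 a b} := by
    rw [h1, sigmaRel_class]
  have hne : ({b | E k t.1.1 a b} : Set (T k)) ≠ {a} := by
    intro hsing
    apply h2
    rw [hcl, hsing, Set.image_singleton]
  refine ⟨k, ⟨(t.1.1, {b | E k t.1.1 a b}), a, rfl, hne⟩, ?_⟩
  apply Subtype.ext
  show (t.1.1, Sigma.mk k '' {b | E k t.1.1 a b}) = t.1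
  rw [← hcl]

include hrefl in
theorem sigmaNode_refl (k : ℕ) (a : TreeNode (T k) (E k))
    (t : TreeNode (Σ k, T k) (sigmaRel E)) (ht : nodeLT (sigmaRel E) (sigmaNode k a) t) :
    ∃ b, nodeLT (E k) a b ∧ sigmaNode k b = t := by
  obtain ⟨⟨k', a'⟩, h1, h2⟩ := t.2
  have hmem : (⟨k', a'⟩ : Σ k, T k) ∈ t.1.2 := by
    rw [h1]
    exact ⟨k', a', a', hrefl _ _ _, rfl, rfl⟩
  have hsub : t.1.2 ⊆ (sigmaNode k a).1.2 := ht.2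
  have : (⟨k', a'⟩ : Σ k, T k) ∈ Sigma.mk k '' a.1.2 := hsub hmem
  obtain ⟨u, hu, hequ⟩ := this
  obtain ⟨rfl, -⟩ := Sigma.mk.inj_iff.1 hequ
  -- now k' = k
  have hcl : t.1.2 = Sigma.mk k '' {b | E k t.1.1 a' b} := by
    rw [h1, sigmaRel_class]
  have hne : ({b | E k t.1.1 a' b} : Set (T k)) ≠ {a'} := by
    intro hsing
    apply h2
    rw [hcl, hsing, Set.image_singleton]
  refine ⟨⟨(t.1.1, {b | E k t.1.1 a' b}), a', rfl, hne⟩, ⟨ht.1, ?_⟩, ?_⟩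
  · show {b | E k t.1.1 a' b} ⊆ a.1.2
    have himg : Sigma.mk k '' {b | E k t.1.1 a' b} ⊆ Sigma.mk k '' a.1.2 := by
      rw [← hcl]
      exact hsub
    exact (Set.image_subset_image_iff sigma_mk_injective).1 himg
  · apply Subtype.ext
    show (t.1.1, Sigma.mk k '' {b | E k t.1.1 a' b}) = t.1
    rw [← hcl]

include hrefl in
theorem treeRho_sigma (wfS : TreeWF (Σ k, T k) (sigmaRel E)) :
    treeRho (Σ k, T k) (sigmaRel E) = ⨆ k, treeRho (T k) (E k) := by
  have wfk : ∀ k, TreeWF (T k) (E k) := fun k =>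
    wf_of_hom (sigmaNode k) (fun a b hab => sigmaNode_hom k b a hab) (wfS : WellFounded _)
  have hrank : ∀ k (a : TreeNode (T k) (E k)),
      (wfS : WellFounded _).rank (sigmaNode k a) = (wfk k : WellFounded _).rank a := by
    intro k a
    apply rank_eq_rank_of_hom (wfk k) wfS (sigmaNode k)
    · intro a b hab
      exact sigmaNode_hom k b a hab
    · intro a b' hb'
      obtain ⟨b, hb1, hb2⟩ := sigmaNode_refl hrefl k a b' hb'
      exact ⟨b, hb1, hb2⟩
  apply le_antisymm
  · rw [treeRho, rhoRel_eq_of_wf (wfS : WellFounded _)]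
    apply Ordinal.iSup_le
    intro t
    obtain ⟨k, t₀, rfl⟩ := sigmaNode_surj t
    rw [hrank k t₀]
    refine le_trans ?_ (Ordinal.le_iSup (fun k => treeRho (T k) (E k)) k)
    rw [treeRho, rhoRel_eq_of_wf (wfk k : WellFounded _)]
    exact Ordinal.le_iSup (fun s : TreeNode (T k) (E k) =>
      Order.succ ((wfk k : WellFounded _).rank s)) t₀
  · apply Ordinal.iSup_le
    intro k
    rw [treeRho, rhoRel_eq_of_wf (wfk k : WellFounded _),
      treeRho, rhoRel_eq_of_wf (wfS : WellFounded _)]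
    apply Ordinal.iSup_le
    intro t₀
    rw [← hrank k t₀]
    exact Ordinal.le_iSup (fun t : TreeNode (Σ k, T k) (sigmaRel E) =>
      Order.succ ((wfS : WellFounded _).rank t)) (sigmaNode k t₀)

end SigmaLemma

section Glue

variable {G H : Type} [Group G] [TopologicalSpace G] [IsTopologicalGroup G]
  [Group H] [TopologicalSpace H] [IsTopologicalGroup H]

noncomputable def prodMS {G H : Type} (mG : MetricSpace G) (mH : MetricSpace H) :
    MetricSpace (G × H) :=
  letI := mG; letI := mH
  inferInstance

theorem isCLI_prod (hG : IsCLI G) (hH : IsCLI H) : IsCLI (G × H) := by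
  obtain ⟨mG, hGt, hGc, hGi⟩ := hG
  obtain ⟨mH, hHt, hHc, hHi⟩ := hH
  refine ⟨prodMS mG mH, ?_, ?_, ?_⟩
  · have h1 : (prodMS mG mH).toUniformSpace.toTopologicalSpace =
        @instTopologicalSpaceProd G H mG.toUniformSpace.toTopologicalSpace
          mH.toUniformSpace.toTopologicalSpace := rfl
    rw [h1, hGt, hHt]
  · letI := mG; letI := mH
    haveI := hGc; haveI := hHc
    exact @CompleteSpace.prod G H mG.toUniformSpace mH.toUniformSpace hGc hHc
  · intro g h k
    letI := mG; letI := mH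
    show dist (g * h) (g * k) = dist h k
    rw [Prod.dist_eq, Prod.dist_eq]
    show max (dist (g.1 * h.1) (g.1 * k.1)) (dist (g.2 * h.2) (g.2 * k.2)) = _
    rw [hGi, hHi]

def prodDgnb (𝒢 : Dgnb G) (ℋ : Dgnb H) : Dgnb (G × H) where
  seq n := (𝒢.seq n).prod (ℋ.seq n)
  isOpen n := by
    have h1 : (((𝒢.seq n).prod (ℋ.seq n) : Subgroup (G × H)) : Set (G × H)) =
        (𝒢.seq n : Set G) ×ˢ (ℋ.seq n : Set H) := rfl
    rw [h1]
    exact (𝒢.isOpen n).prod (ℋ.isOpen n)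
  antitone n := fun x hx => ⟨𝒢.antitone n hx.1, ℋ.antitone n hx.2⟩
  zero_eq_top := by
    show (𝒢.seq 0).prod (ℋ.seq 0) = ⊤
    rw [𝒢.zero_eq_top, ℋ.zero_eq_top]
    exact Subgroup.top_prod_top
  basis U hU := by
    rw [show ((1 : G × H)) = ((1 : G), (1 : H)) from rfl] at hU
    obtain ⟨A, hA, B, hB, hAB⟩ := mem_nhds_prod_iff.1 hU
    obtain ⟨na, hna⟩ := 𝒢.basis A hA
    obtain ⟨nb, hnb⟩ := ℋ.basis B hB
    refine ⟨max na nb, fun p hp => hAB ?_⟩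
    exact ⟨hna (subgroup_seq_mono 𝒢.seq 𝒢.antitone (le_max_left na nb) hp.1),
      hnb (subgroup_seq_mono ℋ.seq ℋ.antitone (le_max_right na nb) hp.2)⟩

/-- stabilizers of points in coset spaces are open -/
theorem stab_isOpen (𝒢 : Dgnb G) (k : ℕ) (x : G ⧸ 𝒢.seq k) :
    IsOpen {g : G | g • x = x} := by
  induction x using QuotientGroup.induction_on with
  | H a =>
    have h1 : {g : G | g • (a : G ⧸ 𝒢.seq k) = a} =
        (fun g : G => (g * a)⁻¹ * a) ⁻¹' (𝒢.seq k : Set G) := by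
      ext g
      show g • (a : G ⧸ 𝒢.seq k) = a ↔ _
      rw [MulAction.Quotient.smul_mk, smul_eq_mul]
      rw [Set.mem_preimage, SetLike.mem_coe, ← QuotientGroup.eq]
    rw [h1]
    exact (𝒢.isOpen k).preimage (by continuity)

/-- quotient of a product by a product subgroup -/
def quotProdEquiv (A : Subgroup G) (B : Subgroup H) :
    ((G × H) ⧸ A.prod B) ≃ (G ⧸ A) × (H ⧸ B) where
  toFun q := Quotient.liftOn' q (fun p => ((p.1 : G ⧸ A), (p.2 : H ⧸ B))) (by
    intro p p' hpp
    rw [QuotientGroup.leftRel_apply] at hpp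
    have h1 : p.1⁻¹ * p'.1 ∈ A := hpp.1
    have h2 : p.2⁻¹ * p'.2 ∈ B := hpp.2
    exact Prod.ext (QuotientGroup.eq.2 h1) (QuotientGroup.eq.2 h2))
  invFun p := Quotient.liftOn₂' p.1 p.2 (fun g h => (((g, h) : G × H) : (G × H) ⧸ A.prod B))
    (by
      intro g h g' h' hg hh
      rw [QuotientGroup.leftRel_apply] at hg hh
      apply QuotientGroup.eq.2
      exact ⟨hg, hh⟩)
  left_inv q := by
    induction q using Quotient.inductionOn' with
    | h p => rfl
  right_inv p := by
    obtain ⟨q1, q2⟩ := p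
    induction q1 using Quotient.inductionOn' with
    | h g =>
      induction q2 using Quotient.inductionOn' with
      | h h => rfl

theorem quotProdEquiv_equivariant (A : Subgroup G) (B : Subgroup H) (a : G) (b : H)
    (x : (G × H) ⧸ A.prod B) :
    quotProdEquiv A B (((a, b) : G × H) • x) =
      (a • (quotProdEquiv A B x).1, b • (quotProdEquiv A B x).2) := by
  induction x using QuotientGroup.induction_on with
  | H p => rfl

end Glue


section Transport

variable {X Y : Type} {E : ℕ → X → X → Prop} {F : ℕ → Y → Y → Prop}

def nodeMap (e : X ≃ Y) (he : ∀ n x y, E n x y ↔ F n (e x) (e y)) (s : TreeNode X E) :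
    TreeNode Y F := by
  refine ⟨(s.1.1, e '' s.1.2), ?_⟩
  obtain ⟨x, hx1, hx2⟩ := s.2
  refine ⟨e x, ?_, ?_⟩
  · show e '' s.1.2 = {y | F s.1.1 (e x) y}
    rw [hx1]
    ext y
    constructor
    · rintro ⟨u, hu, rfl⟩
      exact (he _ _ _).1 hu
    · intro hy
      refine ⟨e.symm y, ?_, e.apply_symm_apply y⟩
      show E s.1.1 x (e.symm y)
      rw [he s.1.1 x (e.symm y), e.apply_symm_apply]
      exact hy
  · intro hcon
    have hcon' : e '' s.1.2 = {e x} := hcon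
    apply hx2
    rw [← Set.image_singleton] at hcon'
    exact Set.image_injective.2 e.injective hcon'

theorem nodeMap_hom (e : X ≃ Y) (he : ∀ n x y, E n x y ↔ F n (e x) (e y))
    (a b : TreeNode X E) (hab : nodeLT E a b) :
    nodeLT F (nodeMap e he a) (nodeMap e he b) :=
  ⟨hab.1, Set.image_mono hab.2⟩

theorem treeWF_congr {E' : ℕ → X → X → Prop} (h : ∀ n x y, E n x y ↔ E' n x y)
    (hwf : TreeWF X E) : TreeWF X E' := by
  have hEE : E = E' := funext fun n => funext fun a => funext fun b => propext (h n a b)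
  rw [← hEE]
  exact hwf

theorem treeRho_congr' {E' : ℕ → X → X → Prop} (h : ∀ n x y, E n x y ↔ E' n x y) :
    treeRho X E = treeRho X E' := by
  have hEE : E = E' := funext fun n => funext fun a => funext fun b => propext (h n a b)
  rw [hEE]

theorem treeRho_equiv (e : X ≃ Y) (he : ∀ n x y, E n x y ↔ F n (e x) (e y))
    (wfY : TreeWF Y F) : treeRho X E = treeRho Y F := by
  have he' : ∀ n y y', F n y y' ↔ E n (e.symm y) (e.symm y') := by
    intro n y y'
    rw [he n (e.symm y) (e.symm y'), e.apply_symm_apply, e.apply_symm_apply]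
  have wfX : TreeWF X E := wf_of_hom (nodeMap e he)
    (fun a b hab => nodeMap_hom e he b a hab) wfY
  exact le_antisymm
    (rhoRel_le_of_hom (nodeMap e he) (nodeMap_hom e he) wfY)
    (rhoRel_le_of_hom (nodeMap e.symm he') (nodeMap_hom e.symm he') wfX)

end Transport

section GroupGlue

variable {G H : Type} [Group G] [TopologicalSpace G] [IsTopologicalGroup G]
  [Group H] [TopologicalSpace H] [IsTopologicalGroup H]

theorem dgnbRel_refl (𝒢 : Dgnb G) (X : Type) [MulAction G X] :
    ∀ n (x : X), dgnbRel 𝒢 X n x x :=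
  fun _ x => ⟨1, one_mem _, one_smul _ x⟩

theorem dgnbRel_classext (𝒢 : Dgnb G) (X : Type) [MulAction G X] :
    ∀ n (x y : X), dgnbRel 𝒢 X n x y → ∀ z, (dgnbRel 𝒢 X n x z ↔ dgnbRel 𝒢 X n y z) := by
  rintro n x y ⟨g, hg, rfl⟩ z
  constructor
  · rintro ⟨a, ha, rfl⟩
    refine ⟨a * g⁻¹, mul_mem ha (inv_mem hg), ?_⟩
    rw [smul_smul, inv_mul_cancel_right]
  · rintro ⟨a, ha, rfl⟩
    refine ⟨a * g, mul_mem ha hg, ?_⟩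
    rw [smul_smul]

theorem dgnbRel_anti (𝒢 : Dgnb G) (X : Type) [MulAction G X] :
    ∀ m n (x y : X), m ≤ n → dgnbRel 𝒢 X n x y → dgnbRel 𝒢 X m x y := by
  rintro m n x y hmn ⟨g, hg, rfl⟩
  exact ⟨g, subgroup_seq_mono 𝒢.seq 𝒢.antitone hmn hg, rfl⟩

theorem wfQuot (hcli : IsCLI G) (𝒢 : Dgnb G) (k : ℕ) :
    TreeWF (G ⧸ 𝒢.seq k) (dgnbRel 𝒢 (G ⧸ 𝒢.seq k)) :=
  treeWF_of_cli hcli 𝒢 (fun g (x : G ⧸ 𝒢.seq k) => g • x)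
    (fun x => one_smul G x) (fun g h x => mul_smul g h x) (stab_isOpen 𝒢 k)

theorem wfProd (hcliG : IsCLI G) (hcliH : IsCLI H) (𝒢 : Dgnb G) (ℋ : Dgnb H) (k : ℕ) :
    TreeWF ((G ⧸ 𝒢.seq k) × (H ⧸ ℋ.seq k))
      (prodRel (dgnbRel 𝒢 (G ⧸ 𝒢.seq k)) (dgnbRel ℋ (H ⧸ ℋ.seq k))) := by
  have hwf := treeWF_of_cli (isCLI_prod hcliG hcliH) (prodDgnb 𝒢 ℋ)
      (fun (p : G × H) (q : (G ⧸ 𝒢.seq k) × (H ⧸ ℋ.seq k)) => (p.1 • q.1, p.2 • q.2))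
      (fun q => by
        show ((1 : G) • q.1, (1 : H) • q.2) = q
        rw [one_smul, one_smul])
      (fun g h q => by
        show ((g.1 * h.1) • q.1, (g.2 * h.2) • q.2) = _
        rw [mul_smul, mul_smul])
      (fun q => by
        have h1 : {p : G × H | (p.1 • q.1, p.2 • q.2) = q} =
            {g : G | g • q.1 = q.1} ×ˢ {h : H | h • q.2 = q.2} := by
          ext p
          simp only [Set.mem_setOf_eq, Set.mem_prod, Prod.ext_iff]
        rw [h1]
        exact (stab_isOpen 𝒢 k q.1).prod (stab_isOpen ℋ k q.2))
  refine treeWF_congr ?_ hwf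
  intro n x y
  constructor
  · rintro ⟨⟨a, b⟩, hab, heq⟩
    have hab' : (a, b) ∈ (𝒢.seq n).prod (ℋ.seq n) := hab
    rw [Subgroup.mem_prod] at hab'
    exact ⟨⟨a, hab'.1, (Prod.ext_iff.1 heq).1⟩, ⟨b, hab'.2, (Prod.ext_iff.1 heq).2⟩⟩
  · rintro ⟨⟨a, ha, hax⟩, ⟨b, hb, hbx⟩⟩
    exact ⟨(a, b), Subgroup.mem_prod.2 ⟨ha, hb⟩, Prod.ext hax hbx⟩

/-- fiber relations for the sigma space -/
def Esig (𝒢 : Dgnb G) : (k : ℕ) → ℕ → (G ⧸ 𝒢.seq k) → (G ⧸ 𝒢.seq k) → Prop :=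
  fun k => dgnbRel 𝒢 (G ⧸ 𝒢.seq k)

theorem sigRel_iff (𝒢 : Dgnb G) (n : ℕ) (p q : Σ k, G ⧸ 𝒢.seq k) :
    (∃ g ∈ 𝒢.seq n, q = ⟨p.1, g • p.2⟩) ↔ sigmaRel (Esig 𝒢) n p q := by
  constructor
  · rintro ⟨g, hg, rfl⟩
    exact ⟨p.1, p.2, g • p.2, ⟨g, hg, rfl⟩, rfl, rfl⟩
  · rintro ⟨k, a, b, ⟨g, hg, hgab⟩, rfl, rfl⟩
    exact ⟨g, hg, by rw [hgab]⟩

theorem wfSigma (hcli : IsCLI G) (𝒢 : Dgnb G) :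
    TreeWF (Σ k, G ⧸ 𝒢.seq k) (sigmaRel (Esig 𝒢)) := by
  have hwf := treeWF_of_cli hcli 𝒢
      (fun g (p : Σ k, G ⧸ 𝒢.seq k) => ⟨p.1, g • p.2⟩)
      (fun p => by
        show (⟨p.1, (1 : G) • p.2⟩ : Σ k, G ⧸ 𝒢.seq k) = p
        rw [one_smul])
      (fun g h p => by
        show (⟨p.1, (g * h) • p.2⟩ : Σ k, G ⧸ 𝒢.seq k) = _
        rw [mul_smul])
      (fun p => by
        obtain ⟨k, c⟩ := p
        have h1 : {g : G | (⟨k, g • c⟩ : Σ k, G ⧸ 𝒢.seq k) = ⟨k, c⟩} =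
            {g : G | g • c = c} := by
          ext g
          simp [Sigma.mk.inj_iff]
        rw [h1]
        exact stab_isOpen 𝒢 k c)
  refine treeWF_congr ?_ hwf
  intro n x y
  rw [← sigRel_iff]
  constructor
  · rintro ⟨g, hg, rfl⟩
    exact ⟨g, hg, rfl⟩
  · rintro ⟨g, hg, rfl⟩
    exact ⟨g, hg, rfl⟩

theorem rhoDgnb_eq_iSup (hcli : IsCLI G) (𝒢 : Dgnb G) :
    rhoDgnb 𝒢 = ⨆ k, rhoK 𝒢 k := by
  have hrefl : ∀ (k n : ℕ) (a : G ⧸ 𝒢.seq k), Esig 𝒢 k n a a :=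
    fun k n a => dgnbRel_refl 𝒢 _ n a
  rw [rhoDgnb, treeRho_congr' (sigRel_iff 𝒢), treeRho_sigma hrefl (wfSigma hcli 𝒢)]
  rfl

theorem rhoK_prod (hcliG : IsCLI G) (hcliH : IsCLI H) (𝒢 : Dgnb G) (ℋ : Dgnb H) (k : ℕ) :
    rhoK (prodDgnb 𝒢 ℋ) k = max (rhoK 𝒢 k) (rhoK ℋ k) := by
  have he : ∀ n (x y : (G × H) ⧸ (prodDgnb 𝒢 ℋ).seq k),
      dgnbRel (prodDgnb 𝒢 ℋ) _ n x y ↔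
      prodRel (dgnbRel 𝒢 (G ⧸ 𝒢.seq k)) (dgnbRel ℋ (H ⧸ ℋ.seq k)) n
        (quotProdEquiv (𝒢.seq k) (ℋ.seq k) x) (quotProdEquiv (𝒢.seq k) (ℋ.seq k) y) := by
    intro n x y
    constructor
    · rintro ⟨⟨a, b⟩, hab, rfl⟩
      have hab' : (a, b) ∈ (𝒢.seq n).prod (ℋ.seq n) := hab
      rw [Subgroup.mem_prod] at hab'
      erw [quotProdEquiv_equivariant]
      exact ⟨⟨a, hab'.1, rfl⟩, ⟨b, hab'.2, rfl⟩⟩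
    · rintro ⟨⟨a, ha, hax⟩, ⟨b, hb, hbx⟩⟩
      refine ⟨(a, b), Subgroup.mem_prod.2 ⟨ha, hb⟩, ?_⟩
      apply (quotProdEquiv (𝒢.seq k) (ℋ.seq k)).injective
      erw [quotProdEquiv_equivariant]
      exact Prod.ext hax hbx
  rw [rhoK]
  exact (treeRho_equiv (quotProdEquiv (𝒢.seq k) (ℋ.seq k)) he
      (wfProd hcliG hcliH 𝒢 ℋ k)).trans
    (treeRho_prod (dgnbRel_refl 𝒢 _) (dgnbRel_refl ℋ _)
      (dgnbRel_classext 𝒢 _) (dgnbRel_classext ℋ _)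
      (fun m n x y hmn => dgnbRel_anti 𝒢 _ m n x y hmn)
      (fun m n x y hmn => dgnbRel_anti ℋ _ m n x y hmn)
      ((1 : G) : G ⧸ 𝒢.seq k) ((1 : H) : H ⧸ ℋ.seq k)
      (wfQuot hcliG 𝒢 k) (wfQuot hcliH ℋ k) (wfProd hcliG hcliH 𝒢 ℋ k))

end GroupGlue

theorem iSup_max (f g : ℕ → Ordinal) :
    (⨆ k, max (f k) (g k)) = max (⨆ k, f k) (⨆ k, g k) := by
  apply le_antisymm
  · apply Ordinal.iSup_le
    intro k
    exact max_le_max (Ordinal.le_iSup f k) (Ordinal.le_iSup g k)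
  · apply max_le
    · apply Ordinal.iSup_le
      intro k
      exact le_trans (le_max_left (f k) (g k))
        (Ordinal.le_iSup (fun k => max (f k) (g k)) k)
    · apply Ordinal.iSup_le
      intro k
      exact le_trans (le_max_right (f k) (g k))
        (Ordinal.le_iSup (fun k => max (f k) (g k)) k)

theorem omegaPart_mono {a b : Ordinal} (h : a ≤ b) : omegaPart a ≤ omegaPart b := by
  apply csSup_le_csSup
  · exact ⟨b, fun c hc => hc.2⟩
  · exact ⟨0, Or.inl rfl, (zero_le : (0 : Ordinal) ≤ a)⟩
  · intro c hc
    exact ⟨hc.1, le_trans hc.2 h⟩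

theorem omegaPart_max (a b : Ordinal) :
    omegaPart (max a b) = max (omegaPart a) (omegaPart b) := by
  rcases le_total a b with h | h
  · rw [max_eq_right h, max_eq_right (omegaPart_mono h)]
  · rw [max_eq_left h, max_eq_left (omegaPart_mono h)]


theorem statement_10 (G H : Type)
    [Group G] [TopologicalSpace G] [IsTopologicalGroup G] [PolishSpace G]
    [Group H] [TopologicalSpace H] [IsTopologicalGroup H] [PolishSpace H]
    (hnaG : IsNonArch G) (hcliG : IsCLI G) (hnaH : IsNonArch H) (hcliH : IsCLI H)
    (𝒢 : Dgnb G) (ℋ : Dgnb H) :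
    ∃ 𝒦 : Dgnb (G × H),
      (∀ n, 𝒦.seq n = (𝒢.seq n).prod (ℋ.seq n)) ∧
      (∀ k, rhoK 𝒦 k = max (rhoK 𝒢 k) (rhoK ℋ k)) ∧
      rhoDgnb 𝒦 = max (rhoDgnb 𝒢) (rhoDgnb ℋ) ∧
      omegaPart (rhoDgnb 𝒦) = max (omegaPart (rhoDgnb 𝒢)) (omegaPart (rhoDgnb ℋ)) := by
  have hk : ∀ k, rhoK (prodDgnb 𝒢 ℋ) k = max (rhoK 𝒢 k) (rhoK ℋ k) :=
    rhoK_prod hcliG hcliH 𝒢 ℋ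
  have hrho : rhoDgnb (prodDgnb 𝒢 ℋ) = max (rhoDgnb 𝒢) (rhoDgnb ℋ) := by
    rw [rhoDgnb_eq_iSup (isCLI_prod hcliG hcliH) (prodDgnb 𝒢 ℋ),
      rhoDgnb_eq_iSup hcliG 𝒢, rhoDgnb_eq_iSup hcliH ℋ]
    rw [show (fun k => rhoK (prodDgnb 𝒢 ℋ) k) = fun k => max (rhoK 𝒢 k) (rhoK ℋ k) from
      funext hk]
    exact iSup_max _ _
  exact ⟨prodDgnb 𝒢 ℋ, fun n => rfl, hk, hrho, by rw [hrho, omegaPart_max]⟩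

end
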